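/- arXiv:2603.18638 — 3 statements merged into one kernel-verified Lean document; each statement's English description precedes it below -/
import Mathlib

section
/- Let p,q ≥ 3 be integers with (p-2)(q-2) > 4 and let β be the larger root of (p-2)x² - (p-2)(q-2)x + (q-2) = 0. If p = 3 then ⌊β⌋ = q - 4, and if p > 3 then ⌊β⌋ = q - 3. -/
/-- For a hyperbolic {p,q}-tessellation, the floor of β (the larger root of
(p-2)x² - (p-2)(q-2)x + (q-2) = 0) equals q-4 when p = 3 and q-3 when p > 3. -/
theorem stmt_1 (p q : ℕ) (hp : 3 ≤ p) (hq : 3 ≤ q)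
    (hhyp : 4 < ((p : ℝ) - 2) * ((q : ℝ) - 2))
    (β : ℝ)
    (hβ : β = (((p : ℝ) - 2) * ((q : ℝ) - 2) +
        Real.sqrt (((p : ℝ) - 2) ^ 2 * ((q : ℝ) - 2) ^ 2 -
          4 * ((p : ℝ) - 2) * ((q : ℝ) - 2))) / (2 * ((p : ℝ) - 2))) :
    (p = 3 → ⌊β⌋ = (q : ℤ) - 4) ∧ (3 < p → ⌊β⌋ = (q : ℤ) - 3) := by
  have hpR : (3:ℝ) ≤ (p:ℝ) := by exact_mod_cast hp
  have hqR : (3:ℝ) ≤ (q:ℝ) := by exact_mod_cast hq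
  set a : ℝ := (p:ℝ) - 2 with ha
  set b : ℝ := (q:ℝ) - 2 with hb
  have ha1 : 1 ≤ a := by simp only [ha]; linarith
  have hb1 : 1 ≤ b := by simp only [hb]; linarith
  have hrad : 0 ≤ a ^ 2 * b ^ 2 - 4 * a * b := by nlinarith
  set s : ℝ := Real.sqrt (a ^ 2 * b ^ 2 - 4 * a * b) with hsdef
  have hs0 : 0 ≤ s := Real.sqrt_nonneg _
  have hs2 : s ^ 2 = a ^ 2 * b ^ 2 - 4 * a * b := Real.sq_sqrt hrad
  constructor
  · intro hp3
    subst hp3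
    have haeq : a = 1 := by norm_num [ha]
    rw [haeq] at hhyp hs2 hβ
    have hb4 : 4 < b := by linarith
    have h1 : b - 4 ≤ s := by nlinarith [hs2, hs0]
    have h2 : s < b - 2 := by nlinarith [hs2, hs0]
    rw [hβ, Int.floor_eq_iff]
    push_cast
    constructor
    · rw [le_div_iff₀ (by norm_num : (0:ℝ) < 2 * 1)]
      simp only [hb]; linarith
    · rw [div_lt_iff₀ (by norm_num : (0:ℝ) < 2 * 1)]
      simp only [hb]; linarith
  · intro hp4
    have ha2 : 2 ≤ a := by
      have : (4:ℝ) ≤ (p:ℝ) := by exact_mod_cast hp4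
      simp only [ha]; linarith
    have ha0 : 0 < a := by linarith
    have hup : s < a * b := by nlinarith [hs2, hs0]
    have hlow : a * b - 2 * a ≤ s := by
      by_cases hble : b ≤ 2
      · nlinarith
      · push_neg at hble
        have hq4 : (4:ℝ) < (q:ℝ) := by simp only [hb] at hble; linarith
        have hq4' : 4 < q := by exact_mod_cast hq4
        have hq5 : (5:ℝ) ≤ (q:ℝ) := by exact_mod_cast hq4'
        have hb3 : 3 ≤ b := by simp only [hb]; linarith
        nlinarith [hs2, hs0]
    have hqb : (q:ℝ) = b + 2 := by simp only [hb]; ring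
    rw [hβ, Int.floor_eq_iff]
    push_cast
    rw [hqb]
    constructor
    · rw [le_div_iff₀ (by positivity)]
      have hlow' : ((p:ℝ) - 2) * ((q:ℝ) - 2) - 2 * ((p:ℝ) - 2) ≤ s := hlow
      ring_nf at hlow' ⊢
      linarith [hlow']
    · rw [div_lt_iff₀ (by positivity)]
      have hup' : s < ((p:ℝ) - 2) * ((q:ℝ) - 2) := hup
      ring_nf at hup' ⊢
      linarith [hup']
end

section
/- Let p,q ≥ 3 with q > 3 and define P_min(N) = p + (p-2)(N-1) for 1 ≤ N < q, P_min(N) = p + (p-2)(N-1) - 2⌊(N-2)/(q-2)⌋ for q ≤ N ≤ p(q-2), and P_min(p(q-2)+1) = p(p-2)(q-2) - p. Then for M(n,h) = (n(p-2) + 2 - P_min(n+h))/p and any integers n ≥ 1, h ≥ 2 with n + h ≤ p(q-2)+1, one has M(n,h) < 2 ≤ h. -/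
/-- With the explicit minimal-perimeter formula P_min for N ≤ p(q-2)+1, the
hole-bound function M(n,h) = (n(p-2)+2-P_min(n+h))/p satisfies M(n,h) < 2 ≤ h
whenever h ≥ 2 and n + h ≤ p(q-2)+1; hence no such polyform exists. -/
theorem stmt_6 (p q : ℕ) (hp : 3 ≤ p) (hq : 3 < q) (Pmin : ℕ → ℤ)
    (hP1 : ∀ N : ℕ, 1 ≤ N → N < q → Pmin N = (p : ℤ) + ((p : ℤ) - 2) * ((N : ℤ) - 1))
    (hP2 : ∀ N : ℕ, q ≤ N → N ≤ p * (q - 2) →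
      Pmin N = (p : ℤ) + ((p : ℤ) - 2) * ((N : ℤ) - 1) - 2 * (((N : ℤ) - 2) / ((q : ℤ) - 2)))
    (hP3 : Pmin (p * (q - 2) + 1) = (p : ℤ) * ((p : ℤ) - 2) * ((q : ℤ) - 2) - (p : ℤ))
    (n h : ℕ) (hn : 1 ≤ n) (hh : 2 ≤ h) (hrange : n + h ≤ p * (q - 2) + 1) :
    ((n : ℚ) * ((p : ℚ) - 2) + 2 - (Pmin (n + h) : ℚ)) / p < 2 ∧ (2 : ℚ) ≤ (h : ℚ) := by
  have hhq : (2 : ℚ) ≤ (h : ℚ) := by exact_mod_cast hh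
  refine ⟨?_, hhq⟩
  have hpQ : (3 : ℚ) ≤ (p : ℚ) := by exact_mod_cast hp
  have hp' : (0 : ℚ) < p := by linarith
  rw [div_lt_iff₀ hp']
  have hnQ : (1 : ℚ) ≤ (n : ℚ) := by exact_mod_cast hn
  rcases lt_or_ge (n + h) q with hNq | hNq
  · rw [hP1 (n + h) (by omega) hNq]
    push_cast
    nlinarith
  · rcases lt_or_eq_of_le hrange with hlt | heq
    · have hle : n + h ≤ p * (q - 2) := by omega
      rw [hP2 (n + h) hNq hle]
      have hq2 : (0 : ℤ) < (q : ℤ) - 2 := by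
        have : (3 : ℤ) < q := by exact_mod_cast hq
        linarith
      have hdiv : ((n : ℤ) + h - 2) / ((q : ℤ) - 2) ≤ (p : ℤ) - 1 := by
        have hlt2 : ((n : ℤ) + h - 2) / ((q : ℤ) - 2) < p := by
          rw [Int.ediv_lt_iff_lt_mul hq2]
          have : ((n : ℤ) + h) ≤ (p : ℤ) * ((q : ℤ) - 2) := by
            have := hle
            have hc : ((n + h : ℕ) : ℤ) ≤ ((p * (q - 2) : ℕ) : ℤ) := by exact_mod_cast this
            push_cast [Nat.cast_sub (by omega : 2 ≤ q)] at hc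
            linarith
          linarith
        omega
      set d : ℤ := ((n : ℤ) + h - 2) / ((q : ℤ) - 2) with hd
      have hdQ : (d : ℚ) ≤ (p : ℚ) - 1 := by exact_mod_cast hdiv
      push_cast
      nlinarith
    · have : n + h = p * (q - 2) + 1 := by omega
      rw [this, hP3]
      have hnle : (n : ℚ) ≤ (p : ℚ) * ((q : ℚ) - 2) - 1 := by
        have hn' : n + 2 ≤ p * (q - 2) + 1 := by omega
        have hc : ((n : ℚ) + 2) ≤ ((p * (q - 2) : ℕ) : ℚ) + 1 := by exact_mod_cast hn'
        push_cast [Nat.cast_sub (by omega : 2 ≤ q)] at hc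
        linarith
      have hqQ : (4 : ℚ) ≤ (q : ℚ) := by exact_mod_cast hq
      push_cast
      nlinarith
end

section
/- Let p,q ≥ 3 with q > 3 and (p-2)(q-2) > 4, let β be the larger root of (p-2)x² - (p-2)(q-2)x + (q-2) = 0, and let h ≥ 2, g be positive reals. Suppose h·p ≤ g(p-2) - (p - 2 - 2/β)(g + h). Then β(p - 1 - 1/β)·h ≤ g. -/
/-- Algebraic core of the lower bound of Theorem 1.6: if
h·p ≤ g(p-2) - (p-2-2/β)(g+h) with β the larger root of
(p-2)x² - (p-2)(q-2)x + (q-2) = 0, then β(p-1-1/β)·h ≤ g. -/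
theorem stmt_12 (p q : ℕ) (hp : 3 ≤ p) (hq : 3 < q)
    (hhyp : 4 < ((p : ℝ) - 2) * ((q : ℝ) - 2))
    (β : ℝ)
    (hβ : β = (((p : ℝ) - 2) * ((q : ℝ) - 2) +
        Real.sqrt (((p : ℝ) - 2) ^ 2 * ((q : ℝ) - 2) ^ 2 -
          4 * ((p : ℝ) - 2) * ((q : ℝ) - 2))) / (2 * ((p : ℝ) - 2)))
    (h g : ℝ) (hh : 2 ≤ h) (hg : 0 < g)
    (hineq : h * p ≤ g * ((p : ℝ) - 2) - ((p : ℝ) - 2 - 2 / β) * (g + h)) :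
    β * ((p : ℝ) - 1 - 1 / β) * h ≤ g := by
  have hp3 : (3 : ℝ) ≤ (p : ℝ) := by exact_mod_cast hp
  have hβpos : 0 < β := by
    rw [hβ]
    apply div_pos
    · nlinarith [Real.sqrt_nonneg (((p : ℝ) - 2) ^ 2 * ((q : ℝ) - 2) ^ 2 -
          4 * ((p : ℝ) - 2) * ((q : ℝ) - 2))]
    · linarith
  have hβne : β ≠ 0 := ne_of_gt hβpos
  have e : 2 / β * β = 2 := div_mul_cancel₀ 2 hβne
  have e1 : 1 / β * β = 1 := one_div_mul_cancel hβne
  have h2 := mul_le_mul_of_nonneg_right hineq hβpos.le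
  nlinarith [h2, e, e1]
end
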